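/- Fix a positive integer K, and let ξ ≥ 0 satisfy V_n(K') ≥ −ξ for all n ≥ 1 and all positive integers K'. Let δ > 0, ρ ∈ ℝ, and let φ be a real sequence on ℤ_{>0} with ‖φ‖_{ℓ²} = 1 decaying exponentially fast at infinity (i.e., |φ(n)| ≤ c θ^n for some c > 0, θ ∈ (0,1)), such that ‖𝓛_K φ + ρ φ‖_{ℓ²} ≤ δ. Then Σ_{n≥1} √(λ_n^K μ_{n+1}^K) (φ(n+1) − φ(n))² + Σ_{n≥1} max(1, V_n(K)) φ(n)² ≤ 1 + ρ + ξ + δ + (1/2)√(λ_1^K μ_2^K). -/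
import Mathlib


open Filter MeasureTheory
open scoped BigOperators Topology ENNReal Classical

noncomputable section

/-- The standing assumptions on the birth and death rate functions `b` and `d`. -/
structure BD where
  b : ℝ → ℝ
  d : ℝ → ℝ
  xs : ℝ
  xs_pos : 0 < xs
  b_zero : b 0 = 0
  d_zero : d 0 = 0
  b_nonneg : ∀ x : ℝ, 0 ≤ x → 0 ≤ b x
  d_nonneg : ∀ x : ℝ, 0 ≤ x → 0 ≤ d x
  bq_pos : ∀ x : ℝ, 0 < x → 0 < b x / x
  dq_pos : ∀ x : ℝ, 0 < x → 0 < d x / x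
  bq_smooth : ContDiffOn ℝ 2 (fun x => b x / x) (Set.Ioi 0)
  dq_smooth : ContDiffOn ℝ 2 (fun x => d x / x) (Set.Ioi 0)
  bq_mono : StrictMonoOn (fun x => b x / x) (Set.Ioi 0)
  dq_mono : StrictMonoOn (fun x => d x / x) (Set.Ioi 0)
  ratio_tendsto : Tendsto (fun x => b x / d x) atTop (nhds 0)
  b_diff : ∀ x : ℝ, 0 ≤ x → DifferentiableAt ℝ b x
  d_diff : ∀ x : ℝ, 0 ≤ x → DifferentiableAt ℝ d x
  deriv_d0_pos : 0 < deriv d 0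
  deriv_b0_gt : deriv d 0 < deriv b 0
  fix : b xs = d xs
  fix_unique : ∀ x : ℝ, 0 < x → b x = d x → x = xs
  stab : deriv b xs < deriv d xs
  int_inv_d : MeasureTheory.IntegrableOn (fun x => 1 / d x) (Set.Ici (xs / 2))
  sup_dlog : ∃ M : ℝ, ∀ x : ℝ, 0 < x → deriv d x / d x - 1 / x ≤ M
  logratio_mono : StrictMonoOn (fun x => Real.log (d x / b x)) (Set.Ioi 0)
  H_smooth : ContDiffOn ℝ 3 (fun x => ∫ s in xs..x, Real.log (d s / b s)) (Set.Ioi 0)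
  H3_bound : ∃ M : ℝ, ∀ x : ℝ, 0 < x →
    (1 + x ^ 2) * |iteratedDeriv 3 (fun y => ∫ s in xs..y, Real.log (d s / b s)) x| ≤ M
  logb_small : Tendsto (fun x => Real.log (b x) / x) atTop (nhds 0)
  logd_small : Tendsto (fun x => Real.log (d x) / x) atTop (nhds 0)

/-- Birth rates `λ_n^K = K b(n/K)`. -/
def BD.lam (S : BD) (K n : ℕ) : ℝ := K * S.b (n / K)

/-- Death rates `μ_n^K = K d(n/K)`. -/
def BD.mu (S : BD) (K n : ℕ) : ℝ := K * S.d (n / K)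

/-- The symmetrized generator `𝓛_K` acting on real sequences (index `0` is unused). -/
def BD.opLR (S : BD) (K : ℕ) (v : ℕ → ℝ) (n : ℕ) : ℝ :=
  Real.sqrt (S.lam K n * S.mu K (n + 1)) * v (n + 1)
  + (if 1 < n then Real.sqrt (S.lam K (n - 1) * S.mu K n) * v (n - 1) else 0)
  - (S.lam K n + S.mu K n) * v n

/-- The potential `V_n(K)`. -/
def BD.Vpot (S : BD) (K n : ℕ) : ℝ :=
  S.lam K n + S.mu K n - Real.sqrt (S.lam K n * S.mu K (n + 1))
    - (if 1 < n then Real.sqrt (S.lam K (n - 1) * S.mu K n) else 0)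

private lemma my_sqrt_mul_le_half_add {x y : ℝ} (hx : 0 ≤ x) (hy : 0 ≤ y) :
    Real.sqrt (x * y) ≤ (x + y) / 2 := by
  rw [Real.sqrt_mul hx]
  nlinarith [sq_nonneg (Real.sqrt x - Real.sqrt y), Real.sq_sqrt hx, Real.sq_sqrt hy,
    Real.sqrt_nonneg x, Real.sqrt_nonneg y]

private lemma my_summable_exp_bound {f : ℕ → ℝ} {A s : ℝ} (hs : s < 0)
    (hf : ∀ n, |f n| ≤ A * Real.exp (s * n)) : Summable f := by
  have hgeo : Summable (fun n : ℕ => A * Real.exp s ^ n) :=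
    (summable_geometric_of_lt_one (Real.exp_pos s).le (Real.exp_lt_one_iff.mpr hs)).mul_left A
  have hgeo' : Summable (fun n : ℕ => A * Real.exp (s * n)) := by
    have : ∀ n : ℕ, A * Real.exp (s * n) = A * Real.exp s ^ n := fun n => by
      rw [mul_comm s (n : ℝ), Real.exp_nat_mul]
    simpa [this] using hgeo
  exact summable_abs_iff.mp (Summable.of_nonneg_of_le (fun n => abs_nonneg _) hf hgeo')

private lemma my_exp_growth {f : ℝ → ℝ} (hfc : ∀ x : ℝ, 0 ≤ x → ContinuousAt f x)
    (hfp : ∀ x : ℝ, 0 < x → 0 < f x)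
    (hlog : Tendsto (fun x => Real.log (f x) / x) atTop (nhds 0))
    {ε : ℝ} (hε : 0 < ε) : ∃ C : ℝ, 0 < C ∧ ∀ x : ℝ, 0 ≤ x → f x ≤ C * Real.exp (ε * x) := by
  have h1 : ∀ᶠ x in atTop, Real.log (f x) / x < ε := hlog.eventually_lt_const hε
  obtain ⟨X, hX⟩ := eventually_atTop.mp (h1.and (eventually_ge_atTop (1 : ℝ)))
  have hX1 : (1 : ℝ) ≤ X := (hX X le_rfl).2
  obtain ⟨M, hM⟩ := (isCompact_Icc (a := (0:ℝ)) (b := X)).exists_bound_of_continuousOn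
    (fun x hx => (hfc x hx.1).continuousWithinAt)
  refine ⟨max M 1, lt_of_lt_of_le one_pos (le_max_right _ _), fun x hx => ?_⟩
  have hCge1 : (1 : ℝ) ≤ max M 1 := le_max_right _ _
  have hexp1 : (1 : ℝ) ≤ Real.exp (ε * x) := Real.one_le_exp (by positivity)
  rcases le_or_gt x X with hxX | hxX
  · have h2 : f x ≤ M := (le_abs_self _).trans (hM x ⟨hx, hxX⟩)
    calc f x ≤ max M 1 := h2.trans (le_max_left _ _)
      _ = max M 1 * 1 := (mul_one _).symm
      _ ≤ max M 1 * Real.exp (ε * x) := mul_le_mul_of_nonneg_left hexp1 (by linarith)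
  · have hx' := hX x hxX.le
    have hxpos : (0 : ℝ) < x := by linarith [hx'.2]
    have hfx : 0 < f x := hfp x hxpos
    have hlt : Real.log (f x) ≤ ε * x := by
      have := hx'.1
      rw [div_lt_iff₀ hxpos] at this
      linarith
    calc f x = Real.exp (Real.log (f x)) := (Real.exp_log hfx).symm
      _ ≤ Real.exp (ε * x) := Real.exp_le_exp.mpr hlt
      _ = 1 * Real.exp (ε * x) := (one_mul _).symm
      _ ≤ max M 1 * Real.exp (ε * x) := mul_le_mul_of_nonneg_right hCge1 (Real.exp_pos _).le

/-- Off-diagonal coefficient `a_n = √(λ_n μ_{n+1})`. -/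
private def aaf (S : BD) (K m : ℕ) : ℝ := Real.sqrt (S.lam K m * S.mu K (m + 1))

/-- Telescoping auxiliary sequence. -/
private def uuf (S : BD) (K : ℕ) (φ : ℕ → ℝ) (m : ℕ) : ℝ :=
  aaf S K m * φ (m + 1) ^ 2 - aaf S K m * (φ m * φ (m + 1))

set_option maxHeartbeats 2000000

/-- Energy bound for approximate eigenvectors of `𝓛_K`. -/
theorem statement14 (S : BD) (K : ℕ) (hK : 1 ≤ K) (ξ : ℝ) (hξ : 0 ≤ ξ)
    (hV : ∀ K' : ℕ, 1 ≤ K' → ∀ n : ℕ, 1 ≤ n → -ξ ≤ S.Vpot K' n)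
    (δ : ℝ) (hδ : 0 < δ) (ρ : ℝ) (φ : ℕ → ℝ)
    (hsum : Summable (fun n : ℕ => (φ (n + 1)) ^ 2))
    (hnorm : ∑' n : ℕ, (φ (n + 1)) ^ 2 = 1)
    (hdecay : ∃ c : ℝ, 0 < c ∧ ∃ θ : ℝ, 0 < θ ∧ θ < 1 ∧ ∀ n : ℕ, |φ n| ≤ c * θ ^ n)
    (herr_sum : Summable (fun n : ℕ => (S.opLR K φ (n + 1) + ρ * φ (n + 1)) ^ 2))
    (herr : Real.sqrt (∑' n : ℕ, (S.opLR K φ (n + 1) + ρ * φ (n + 1)) ^ 2) ≤ δ) :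
    Summable (fun n : ℕ => Real.sqrt (S.lam K (n + 1) * S.mu K (n + 2)) *
      (φ (n + 2) - φ (n + 1)) ^ 2) ∧
    Summable (fun n : ℕ => max 1 (S.Vpot K (n + 1)) * (φ (n + 1)) ^ 2) ∧
    (∑' n : ℕ, Real.sqrt (S.lam K (n + 1) * S.mu K (n + 2)) * (φ (n + 2) - φ (n + 1)) ^ 2)
      + (∑' n : ℕ, max 1 (S.Vpot K (n + 1)) * (φ (n + 1)) ^ 2)
      ≤ 1 + ρ + ξ + δ + (1 / 2) * Real.sqrt (S.lam K 1 * S.mu K 2) := by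
  obtain ⟨c, hc, θ, hθ0, hθ1, hφ⟩ := hdecay
  have ht : Real.log θ < 0 := Real.log_neg hθ0 hθ1
  set t : ℝ := Real.log θ with ht_def
  set ε : ℝ := -t / 2 with hε_def
  have hε : 0 < ε := by rw [hε_def]; linarith
  set s : ℝ := ε + 2 * t with hs_def
  have hs : s < 0 := by rw [hs_def, hε_def]; linarith
  have hφ' : ∀ m : ℕ, |φ m| ≤ c * Real.exp (t * m) := by
    intro m
    have hpow : θ ^ m = Real.exp (t * m) := by
      rw [mul_comm, Real.exp_nat_mul, ht_def, Real.exp_log hθ0]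
    rw [← hpow]; exact hφ m
  have hKR : (1 : ℝ) ≤ K := by exact_mod_cast hK
  have hK0 : (0 : ℝ) < K := by linarith
  have hlam_nn : ∀ n : ℕ, 0 ≤ S.lam K n := fun n =>
    mul_nonneg hK0.le (S.b_nonneg _ (div_nonneg n.cast_nonneg (Nat.cast_nonneg K)))
  have hmu_nn : ∀ n : ℕ, 0 ≤ S.mu K n := fun n =>
    mul_nonneg hK0.le (S.d_nonneg _ (div_nonneg n.cast_nonneg (Nat.cast_nonneg K)))
  have ha_nn : ∀ m : ℕ, 0 ≤ aaf S K m := fun m => Real.sqrt_nonneg _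
  have hlam0 : S.lam K 0 = 0 := by simp [BD.lam, S.b_zero]
  have ha0 : aaf S K 0 = 0 := by simp [aaf, hlam0]
  have hbpos : ∀ x : ℝ, 0 < x → 0 < S.b x := by
    intro x hx
    have h := mul_pos (S.bq_pos x hx) hx
    rwa [div_mul_cancel₀ _ hx.ne'] at h
  have hdpos : ∀ x : ℝ, 0 < x → 0 < S.d x := by
    intro x hx
    have h := mul_pos (S.dq_pos x hx) hx
    rwa [div_mul_cancel₀ _ hx.ne'] at h
  obtain ⟨Cb, hCb, hbB⟩ :=
    my_exp_growth (fun x hx => (S.b_diff x hx).continuousAt) hbpos S.logb_small hε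
  obtain ⟨Cd, hCd, hdB⟩ :=
    my_exp_growth (fun x hx => (S.d_diff x hx).continuousAt) hdpos S.logd_small hε
  set C : ℝ := (K : ℝ) * (Cb + Cd) with hC_def
  have hC : 0 < C := by rw [hC_def]; positivity
  have hg : ∀ n : ℕ, S.lam K n + S.mu K n ≤ C * Real.exp (ε * n) := by
    intro n
    have h0 : (0:ℝ) ≤ (n : ℝ) / K := div_nonneg n.cast_nonneg (Nat.cast_nonneg K)
    have hb := hbB _ h0
    have hd := hdB _ h0
    have hnk : (n : ℝ) / K ≤ n := div_le_self n.cast_nonneg hKR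
    have hmono : Real.exp (ε * ((n:ℝ) / K)) ≤ Real.exp (ε * n) :=
      Real.exp_le_exp.mpr (mul_le_mul_of_nonneg_left hnk hε.le)
    calc S.lam K n + S.mu K n
        = (K:ℝ) * S.b ((n:ℝ)/K) + (K:ℝ) * S.d ((n:ℝ)/K) := rfl
      _ ≤ (K:ℝ) * (Cb * Real.exp (ε * ((n:ℝ)/K))) + (K:ℝ) * (Cd * Real.exp (ε * ((n:ℝ)/K))) := by
          have := mul_le_mul_of_nonneg_left hb hK0.le
          have := mul_le_mul_of_nonneg_left hd hK0.le
          linarith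
      _ = ((K:ℝ) * (Cb + Cd)) * Real.exp (ε * ((n:ℝ)/K)) := by ring
      _ ≤ ((K:ℝ) * (Cb + Cd)) * Real.exp (ε * n) := by
          exact mul_le_mul_of_nonneg_left hmono (by positivity)
      _ = C * Real.exp (ε * n) := by rw [hC_def]
  set C' : ℝ := C * (1 + Real.exp ε) / 2 with hC'_def
  have hC' : 0 < C' := by rw [hC'_def]; positivity
  have ha_b : ∀ m : ℕ, aaf S K m ≤ C' * Real.exp (ε * m) := by
    intro m
    have h1 : aaf S K m ≤ (S.lam K m + S.mu K (m+1)) / 2 :=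
      my_sqrt_mul_le_half_add (hlam_nn m) (hmu_nn (m+1))
    have h2 : S.lam K m ≤ C * Real.exp (ε * m) :=
      le_trans (le_add_of_nonneg_right (hmu_nn m)) (hg m)
    have h3 : S.mu K (m+1) ≤ C * Real.exp (ε * ((m:ℕ)+1 : ℕ)) :=
      le_trans (le_add_of_nonneg_left (hlam_nn (m+1))) (hg (m+1))
    push_cast at h3
    have h4 : Real.exp (ε * ((m:ℝ)+1)) = Real.exp (ε * m) * Real.exp ε := by
      rw [← Real.exp_add]; congr 1; ring
    rw [h4] at h3
    calc aaf S K m ≤ (S.lam K m + S.mu K (m+1)) / 2 := h1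
      _ ≤ (C * Real.exp (ε * m) + C * (Real.exp (ε * m) * Real.exp ε)) / 2 := by linarith
      _ = C' * Real.exp (ε * m) := by rw [hC'_def]; ring
  have hq : ∀ n : ℕ, Real.exp (ε * (n:ℝ)) * Real.exp (t * (n:ℝ)) ^ 2 = Real.exp (s * n) := by
    intro n
    rw [sq, ← Real.exp_add, ← Real.exp_add]
    congr 1
    rw [hs_def]; ring
  have hφsq : ∀ n : ℕ, φ (n+1) ^ 2 ≤ c ^ 2 * Real.exp (t * (n:ℝ)) ^ 2 := by
    intro n
    have p := hφ' (n+1); push_cast at p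
    have e2 : Real.exp (t * ((n:ℝ)+1)) ≤ Real.exp (t * n) :=
      Real.exp_le_exp.mpr (by nlinarith [Nat.cast_nonneg (α := ℝ) n])
    have hb : |φ (n+1)| ≤ c * Real.exp (t * (n:ℝ)) :=
      p.trans (mul_le_mul_of_nonneg_left e2 hc.le)
    calc φ (n+1) ^ 2 = |φ (n+1)| ^ 2 := (sq_abs _).symm
      _ ≤ (c * Real.exp (t * (n:ℝ))) ^ 2 := pow_le_pow_left₀ (abs_nonneg _) hb 2
      _ = c ^ 2 * Real.exp (t * (n:ℝ)) ^ 2 := by ring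
  -- bound for the Dirichlet term
  have hbd1 : ∀ n : ℕ, |aaf S K (n+1) * (φ (n+2) - φ (n+1)) ^ 2|
      ≤ (4 * c ^ 2 * C' * Real.exp ε) * Real.exp (s * n) := by
    intro n
    rw [abs_of_nonneg (mul_nonneg (ha_nn _) (sq_nonneg _))]
    have p2 := hφ' (n+2); have p1 := hφ' (n+1)
    push_cast at p1 p2
    have e1 : Real.exp (t * ((n:ℝ)+2)) ≤ Real.exp (t * n) :=
      Real.exp_le_exp.mpr (by nlinarith [Nat.cast_nonneg (α := ℝ) n])
    have e2 : Real.exp (t * ((n:ℝ)+1)) ≤ Real.exp (t * n) :=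
      Real.exp_le_exp.mpr (by nlinarith [Nat.cast_nonneg (α := ℝ) n])
    have habs : |φ (n+2) - φ (n+1)| ≤ 2 * c * Real.exp (t * (n:ℝ)) := by
      have q1 := mul_le_mul_of_nonneg_left e1 hc.le
      have q2 := mul_le_mul_of_nonneg_left e2 hc.le
      calc |φ (n+2) - φ (n+1)| ≤ |φ (n+2)| + |φ (n+1)| := abs_sub _ _
        _ ≤ 2 * c * Real.exp (t * (n:ℝ)) := by linarith
    have hsq : (φ (n+2) - φ (n+1)) ^ 2 ≤ (2 * c * Real.exp (t * (n:ℝ))) ^ 2 := by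
      rw [← sq_abs]
      exact pow_le_pow_left₀ (abs_nonneg _) habs 2
    have hA := ha_b (n+1)
    push_cast at hA
    have q1 : Real.exp (ε * ((n:ℝ)+1)) = Real.exp ε * Real.exp (ε * n) := by
      rw [← Real.exp_add]; congr 1; ring
    calc aaf S K (n+1) * (φ (n+2) - φ (n+1)) ^ 2
        ≤ (C' * Real.exp (ε * ((n:ℝ)+1))) * (2 * c * Real.exp (t * (n:ℝ))) ^ 2 :=
          mul_le_mul hA hsq (sq_nonneg _) (by positivity)
      _ = (4 * c ^ 2 * C' * Real.exp ε) * (Real.exp (ε * (n:ℝ)) * Real.exp (t * (n:ℝ)) ^ 2) := by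
          rw [q1]; ring
      _ = (4 * c ^ 2 * C' * Real.exp ε) * Real.exp (s * n) := by rw [hq n]
  -- decomposition of the potential
  have hVeq : ∀ n : ℕ, S.Vpot K (n+1) = (S.lam K (n+1) + S.mu K (n+1)) - aaf S K (n+1)
      - (if 1 < n + 1 then aaf S K n else 0) := by
    intro n
    simp only [BD.Vpot, aaf, Nat.add_sub_cancel]
  have hVabs : ∀ n : ℕ, |S.Vpot K (n+1)|
      ≤ (S.lam K (n+1) + S.mu K (n+1)) + aaf S K (n+1) + aaf S K n := by
    intro n
    rw [hVeq n, abs_le]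
    constructor <;> split_ifs <;>
      linarith [hlam_nn (n+1), hmu_nn (n+1), ha_nn (n+1), ha_nn n]
  set Cv : ℝ := C * Real.exp ε + C' * Real.exp ε + C' with hCv_def
  have hCv : 0 < Cv := by rw [hCv_def]; positivity
  have hVexp : ∀ n : ℕ, |S.Vpot K (n+1)| ≤ Cv * Real.exp (ε * n) := by
    intro n
    have h1 := hg (n+1); have h2 := ha_b (n+1); have h3 := ha_b n
    push_cast at h1 h2
    have q1 : Real.exp (ε * ((n:ℝ)+1)) = Real.exp ε * Real.exp (ε * n) := by
      rw [← Real.exp_add]; congr 1; ring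
    rw [q1] at h1 h2
    have h0 := hVabs n
    rw [hCv_def]
    linarith [h0, h1, h2, h3]
  have hbdV : ∀ n : ℕ, |S.Vpot K (n+1) * φ (n+1) ^ 2| ≤ (Cv * c ^ 2) * Real.exp (s * n) := by
    intro n
    rw [abs_mul, abs_of_nonneg (sq_nonneg (φ (n+1)))]
    calc |S.Vpot K (n+1)| * φ (n+1) ^ 2
        ≤ (Cv * Real.exp (ε * n)) * (c ^ 2 * Real.exp (t * (n:ℝ)) ^ 2) :=
          mul_le_mul (hVexp n) (hφsq n) (sq_nonneg _) (by positivity)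
      _ = (Cv * c ^ 2) * (Real.exp (ε * (n:ℝ)) * Real.exp (t * (n:ℝ)) ^ 2) := by ring
      _ = (Cv * c ^ 2) * Real.exp (s * n) := by rw [hq n]
  have hbdmax : ∀ n : ℕ, |max 1 (S.Vpot K (n+1)) * φ (n+1) ^ 2|
      ≤ (c ^ 2 + Cv * c ^ 2) * Real.exp (s * n) := by
    intro n
    have hmax_pos : (0:ℝ) < max 1 (S.Vpot K (n+1)) :=
      lt_of_lt_of_le one_pos (le_max_left _ _)
    rw [abs_mul, abs_of_pos hmax_pos, abs_of_nonneg (sq_nonneg _)]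
    have h1 : max 1 (S.Vpot K (n+1)) ≤ 1 + Cv * Real.exp (ε * n) := by
      have hb := hVexp n
      have := le_abs_self (S.Vpot K (n+1))
      have hEp : (0:ℝ) < Real.exp (ε * n) := Real.exp_pos _
      apply max_le
      · nlinarith
      · linarith
    have h2 : Real.exp (t * (n:ℝ)) ^ 2 ≤ Real.exp (s * (n:ℝ)) := by
      rw [sq, ← Real.exp_add]
      apply Real.exp_le_exp.mpr
      rw [hs_def]
      nlinarith [mul_nonneg hε.le (Nat.cast_nonneg (α := ℝ) n)]
    have h3 : max 1 (S.Vpot K (n+1)) * φ (n+1) ^ 2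
        ≤ (1 + Cv * Real.exp (ε * n)) * (c ^ 2 * Real.exp (t * (n:ℝ)) ^ 2) :=
      mul_le_mul h1 (hφsq n) (sq_nonneg _) (by positivity)
    have h4 : c ^ 2 * Real.exp (t * (n:ℝ)) ^ 2 ≤ c ^ 2 * Real.exp (s * (n:ℝ)) :=
      mul_le_mul_of_nonneg_left h2 (sq_nonneg c)
    calc max 1 (S.Vpot K (n+1)) * φ (n+1) ^ 2
        ≤ (1 + Cv * Real.exp (ε * n)) * (c ^ 2 * Real.exp (t * (n:ℝ)) ^ 2) := h3
      _ = c ^ 2 * Real.exp (t * (n:ℝ)) ^ 2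
          + (Cv * c ^ 2) * (Real.exp (ε * (n:ℝ)) * Real.exp (t * (n:ℝ)) ^ 2) := by ring
      _ = c ^ 2 * Real.exp (t * (n:ℝ)) ^ 2 + (Cv * c ^ 2) * Real.exp (s * n) := by rw [hq n]
      _ ≤ c ^ 2 * Real.exp (s * (n:ℝ)) + (Cv * c ^ 2) * Real.exp (s * n) := by linarith
      _ = (c ^ 2 + Cv * c ^ 2) * Real.exp (s * n) := by ring
  have hbdu : ∀ n : ℕ, |uuf S K φ n| ≤ (2 * c ^ 2 * C') * Real.exp (s * n) := by
    intro n
    have p0 := hφ' n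
    have p1 : |φ (n+1)| ≤ c * Real.exp (t * (n:ℝ)) := by
      have p := hφ' (n+1); push_cast at p
      exact p.trans (mul_le_mul_of_nonneg_left
        (Real.exp_le_exp.mpr (by nlinarith [Nat.cast_nonneg (α := ℝ) n])) hc.le)
    have hbr : |φ (n+1) ^ 2 - φ n * φ (n+1)| ≤ 2 * (c * Real.exp (t * (n:ℝ))) ^ 2 := by
      have hx1 : |φ (n+1) ^ 2| ≤ (c * Real.exp (t * (n:ℝ))) ^ 2 := by
        rw [abs_pow]
        exact pow_le_pow_left₀ (abs_nonneg _) p1 2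
      have hx2 : |φ n * φ (n+1)| ≤ (c * Real.exp (t * (n:ℝ))) ^ 2 := by
        rw [abs_mul, sq]
        exact mul_le_mul p0 p1 (abs_nonneg _) (by positivity)
      calc |φ (n+1) ^ 2 - φ n * φ (n+1)| ≤ |φ (n+1) ^ 2| + |φ n * φ (n+1)| := abs_sub _ _
        _ ≤ 2 * (c * Real.exp (t * (n:ℝ))) ^ 2 := by linarith
    have hfac : uuf S K φ n = aaf S K n * (φ (n+1) ^ 2 - φ n * φ (n+1)) := by
      rw [uuf]; ring
    rw [hfac, abs_mul, abs_of_nonneg (ha_nn n)]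
    calc aaf S K n * |φ (n+1) ^ 2 - φ n * φ (n+1)|
        ≤ (C' * Real.exp (ε * n)) * (2 * (c * Real.exp (t * (n:ℝ))) ^ 2) :=
          mul_le_mul (ha_b n) hbr (abs_nonneg _) (by positivity)
      _ = (2 * c ^ 2 * C') * (Real.exp (ε * (n:ℝ)) * Real.exp (t * (n:ℝ)) ^ 2) := by ring
      _ = (2 * c ^ 2 * C') * Real.exp (s * n) := by rw [hq n]
  -- summability
  have hS1 : Summable (fun n : ℕ => aaf S K (n+1) * (φ (n+2) - φ (n+1)) ^ 2) :=
    my_summable_exp_bound hs hbd1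
  have hSV : Summable (fun n : ℕ => S.Vpot K (n+1) * φ (n+1) ^ 2) :=
    my_summable_exp_bound hs hbdV
  have hS2 : Summable (fun n : ℕ => max 1 (S.Vpot K (n+1)) * φ (n+1) ^ 2) :=
    my_summable_exp_bound hs hbdmax
  have hSu : Summable (uuf S K φ) := my_summable_exp_bound hs hbdu
  have hSu' : Summable (fun n : ℕ => uuf S K φ (n+1)) := (summable_nat_add_iff 1).mpr hSu
  have hSφe : Summable (fun n : ℕ => φ (n+1) * (S.opLR K φ (n+1) + ρ * φ (n+1))) := by
    apply summable_abs_iff.mp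
    apply Summable.of_nonneg_of_le (fun n => abs_nonneg _) ?_ ((hsum.add herr_sum).div_const 2)
    intro n
    rw [abs_mul]
    nlinarith [sq_abs (φ (n+1)), sq_abs (S.opLR K φ (n+1) + ρ * φ (n+1)),
      sq_nonneg (|φ (n+1)| - |S.opLR K φ (n+1) + ρ * φ (n+1)|)]
  -- per-site identity
  have hid : ∀ n : ℕ,
      aaf S K (n+1) * (φ (n+2) - φ (n+1)) ^ 2 + S.Vpot K (n+1) * φ (n+1) ^ 2
      = (ρ * φ (n+1) ^ 2 - φ (n+1) * (S.opLR K φ (n+1) + ρ * φ (n+1)))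
        + (uuf S K φ (n+1) - uuf S K φ n) := by
    intro n
    have hL : S.opLR K φ (n+1) = aaf S K (n+1) * φ (n+2)
        + (if 1 < n+1 then aaf S K n * φ n else 0)
        - (S.lam K (n+1) + S.mu K (n+1)) * φ (n+1) := by
      simp only [BD.opLR, aaf, Nat.add_sub_cancel]
    have hU1 : uuf S K φ (n+1) = aaf S K (n+1) * φ (n+2) ^ 2
        - aaf S K (n+1) * (φ (n+1) * φ (n+2)) := by
      simp only [uuf]
    have hU0 : uuf S K φ n = aaf S K n * φ (n+1) ^ 2 - aaf S K n * (φ n * φ (n+1)) := rfl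
    rcases Nat.eq_zero_or_pos n with h0 | h1
    · subst h0
      rw [hVeq 0, hL, hU1, hU0, ha0]
      norm_num
      ring
    · have h11 : 1 < n+1 := by omega
      rw [hVeq n, hL, hU1, hU0, if_pos h11, if_pos h11]
      ring
  -- telescoping
  have hu0 : uuf S K φ 0 = 0 := by rw [uuf, ha0]; ring
  have htel : ∑' n : ℕ, (uuf S K φ (n+1) - uuf S K φ n) = 0 := by
    rw [Summable.tsum_sub hSu' hSu]
    have h := Summable.tsum_eq_zero_add hSu
    rw [hu0, zero_add] at h
    linarith [h]
  -- key identity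
  have hkey : (∑' n : ℕ, aaf S K (n+1) * (φ (n+2) - φ (n+1)) ^ 2)
      + (∑' n : ℕ, S.Vpot K (n+1) * φ (n+1) ^ 2)
      = ρ - ∑' n : ℕ, φ (n+1) * (S.opLR K φ (n+1) + ρ * φ (n+1)) := by
    rw [← Summable.tsum_add hS1 hSV, tsum_congr hid,
      Summable.tsum_add ((hsum.mul_left ρ).sub hSφe) (hSu'.sub hSu), htel, add_zero,
      Summable.tsum_sub (hsum.mul_left ρ) hSφe, tsum_mul_left, hnorm, mul_one]
  -- Cauchy–Schwarz for the error term
  have hEnn : 0 ≤ ∑' n : ℕ, (S.opLR K φ (n+1) + ρ * φ (n+1)) ^ 2 :=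
    tsum_nonneg fun n => sq_nonneg _
  have hCS : |∑' n : ℕ, φ (n+1) * (S.opLR K φ (n+1) + ρ * φ (n+1))| ≤ δ := by
    have habs : Summable (fun n : ℕ => |φ (n+1) * (S.opLR K φ (n+1) + ρ * φ (n+1))|) := hSφe.abs
    have key : ∀ F : Finset ℕ, ∑ n ∈ F, |φ (n+1) * (S.opLR K φ (n+1) + ρ * φ (n+1))|
        ≤ Real.sqrt (∑' n : ℕ, (S.opLR K φ (n+1) + ρ * φ (n+1)) ^ 2) := by
      intro F
      apply (Real.le_sqrt (Finset.sum_nonneg fun i _ => abs_nonneg _) hEnn).mpr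
      have h1 : (∑ n ∈ F, |φ (n+1)| * |S.opLR K φ (n+1) + ρ * φ (n+1)|) ^ 2
          ≤ (∑ n ∈ F, |φ (n+1)| ^ 2) * (∑ n ∈ F, |S.opLR K φ (n+1) + ρ * φ (n+1)| ^ 2) :=
        Finset.sum_mul_sq_le_sq_mul_sq F _ _
      have h2 : (∑ n ∈ F, |φ (n+1)| ^ 2) ≤ 1 := by
        rw [← hnorm, Finset.sum_congr rfl fun n _ => sq_abs (φ (n+1))]
        exact Summable.sum_le_tsum F (fun i _ => sq_nonneg _) hsum
      have h3 : (∑ n ∈ F, |S.opLR K φ (n+1) + ρ * φ (n+1)| ^ 2)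
          ≤ ∑' n : ℕ, (S.opLR K φ (n+1) + ρ * φ (n+1)) ^ 2 := by
        rw [Finset.sum_congr rfl fun n _ => sq_abs (S.opLR K φ (n+1) + ρ * φ (n+1))]
        exact Summable.sum_le_tsum F (fun i _ => sq_nonneg _) herr_sum
      have h4 : ∑ n ∈ F, |φ (n+1) * (S.opLR K φ (n+1) + ρ * φ (n+1))|
          = ∑ n ∈ F, |φ (n+1)| * |S.opLR K φ (n+1) + ρ * φ (n+1)| :=
        Finset.sum_congr rfl fun n _ => abs_mul _ _
      rw [h4]
      have h5 : (0:ℝ) ≤ ∑ n ∈ F, |S.opLR K φ (n+1) + ρ * φ (n+1)| ^ 2 :=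
        Finset.sum_nonneg fun i _ => sq_nonneg _
      nlinarith [h1, h2, h3, h5]
    have h6 := Summable.tsum_le_of_sum_le habs key
    have h7 : |∑' n : ℕ, φ (n+1) * (S.opLR K φ (n+1) + ρ * φ (n+1))|
        ≤ ∑' n : ℕ, |φ (n+1) * (S.opLR K φ (n+1) + ρ * φ (n+1))| := by
      have hn : Summable (fun n : ℕ => ‖φ (n+1) * (S.opLR K φ (n+1) + ρ * φ (n+1))‖) := by
        simpa only [Real.norm_eq_abs] using habs
      simpa only [Real.norm_eq_abs] using norm_tsum_le_tsum_norm hn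
    exact h7.trans (h6.trans herr)
  have hρδ : (∑' n : ℕ, aaf S K (n+1) * (φ (n+2) - φ (n+1)) ^ 2)
      + (∑' n : ℕ, S.Vpot K (n+1) * φ (n+1) ^ 2) ≤ ρ + δ := by
    rw [hkey]
    have := (abs_le.mp hCS).1
    linarith
  -- comparing max(1, V) with V
  have hdiff_sum : Summable
      (fun n : ℕ => (max 1 (S.Vpot K (n+1)) - S.Vpot K (n+1)) * φ (n+1) ^ 2) := by
    have h := hS2.sub hSV
    simpa [sub_mul] using h
  have hT2 : (∑' n : ℕ, max 1 (S.Vpot K (n+1)) * φ (n+1) ^ 2)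
      = (∑' n : ℕ, S.Vpot K (n+1) * φ (n+1) ^ 2)
        + ∑' n : ℕ, (max 1 (S.Vpot K (n+1)) - S.Vpot K (n+1)) * φ (n+1) ^ 2 := by
    rw [← Summable.tsum_add hSV hdiff_sum]
    exact tsum_congr fun n => by ring
  have hdiff_le : (∑' n : ℕ, (max 1 (S.Vpot K (n+1)) - S.Vpot K (n+1)) * φ (n+1) ^ 2)
      ≤ 1 + ξ := by
    have hpt : ∀ n : ℕ, (max 1 (S.Vpot K (n+1)) - S.Vpot K (n+1)) * φ (n+1) ^ 2
        ≤ (1 + ξ) * φ (n+1) ^ 2 := by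
      intro n
      have hVn := hV K hK (n+1) (Nat.le_add_left 1 n)
      have hd : max 1 (S.Vpot K (n+1)) - S.Vpot K (n+1) ≤ 1 + ξ := by
        rcases le_total (S.Vpot K (n+1)) 1 with h | h
        · rw [max_eq_left h]; linarith
        · rw [max_eq_right h]; linarith
      exact mul_le_mul_of_nonneg_right hd (sq_nonneg _)
    calc (∑' n : ℕ, (max 1 (S.Vpot K (n+1)) - S.Vpot K (n+1)) * φ (n+1) ^ 2)
        ≤ ∑' n : ℕ, (1 + ξ) * φ (n+1) ^ 2 :=
          Summable.tsum_le_tsum hpt hdiff_sum (hsum.mul_left (1 + ξ))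
      _ = (1 + ξ) * 1 := by rw [tsum_mul_left, hnorm]
      _ = 1 + ξ := mul_one _
  have hgoal1 : (fun n : ℕ => Real.sqrt (S.lam K (n + 1) * S.mu K (n + 2)) *
      (φ (n + 2) - φ (n + 1)) ^ 2) = fun n : ℕ => aaf S K (n+1) * (φ (n+2) - φ (n+1)) ^ 2 := rfl
  refine ⟨by rw [hgoal1]; exact hS1, hS2, ?_⟩
  rw [hgoal1, hT2]
  have hsq_nn : 0 ≤ Real.sqrt (S.lam K 1 * S.mu K 2) := Real.sqrt_nonneg _
  linarith
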